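/- For every real x with 0 ≤ x ≤ 1 and every nonnegative integer k, log₂(1 + k·x) ≥ log₂(1 + k) · log₂(1 + x). -/

import Mathlib

open Real

lemma key_rpow_ineq (t : ℝ) (ht0 : 0 ≤ t) (ht1 : t ≤ 1) (K : ℝ) (hK : 1 ≤ K) :
    (1 + K) ^ t ≤ 1 + K * ((2:ℝ) ^ t - 1) := by
  rcases eq_or_lt_of_le ht0 with h0 | h0
  · simp [← h0]
  rcases eq_or_lt_of_le ht1 with h1 | h1
  · subst h1
    simp [Real.rpow_one]
    ring_nf
    norm_num
  have hKpos : (0:ℝ) < K := lt_of_lt_of_le one_pos hK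
  have hc : ConcaveOn ℝ (Set.Ici 0) fun s : ℝ => s ^ t :=
    (Real.strictConcaveOn_rpow h0 h1).concaveOn
  have hmem1 : (1:ℝ) ∈ Set.Ici (0:ℝ) := by norm_num
  have hmem2 : (1 + K) ∈ Set.Ici (0:ℝ) := by simp; linarith
  have ha : (0:ℝ) ≤ (K - 1) / K := div_nonneg (by linarith) hKpos.le
  have hb : (0:ℝ) ≤ 1 / K := by positivity
  have hab : (K - 1) / K + 1 / K = 1 := by field_simp; ring
  have := hc.2 hmem1 hmem2 ha hb hab
  simp only [smul_eq_mul, mul_one] at this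
  have harg : (K - 1) / K + 1 / K * (1 + K) = 2 := by field_simp; ring
  rw [harg] at this
  rw [Real.one_rpow, mul_one] at this
  -- this : (K-1)/K + (1/K) * (1+K)^t ≤ 2^t
  have h2 : K * ((K - 1) / K + 1 / K * (1 + K) ^ t) ≤ K * (2:ℝ) ^ t :=
    mul_le_mul_of_nonneg_left this hKpos.le
  have he : K * ((K - 1) / K + 1 / K * (1 + K) ^ t) = (K - 1) + (1 + K) ^ t := by
    field_simp
  rw [he] at h2
  linarith

theorem stmt_3 (x : ℝ) (hx0 : 0 ≤ x) (hx1 : x ≤ 1) (k : ℕ) :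
    Real.logb 2 (1 + (k : ℝ) * x) ≥ Real.logb 2 (1 + (k : ℝ)) * Real.logb 2 (1 + x) := by
  rcases Nat.eq_zero_or_pos k with hk | hk
  · subst hk; simp
  have hK : (1:ℝ) ≤ (k:ℝ) := by exact_mod_cast hk
  set t : ℝ := Real.logb 2 (1 + x) with htdef
  have hx1' : (0:ℝ) < 1 + x := by linarith
  have ht0 : 0 ≤ t := Real.logb_nonneg one_lt_two (by linarith)
  have ht1 : t ≤ 1 := by
    have : Real.logb 2 (1 + x) ≤ Real.logb 2 2 :=
      Real.logb_le_logb_of_le (by norm_num) hx1' (by linarith)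
    simpa [Real.logb_self_eq_one] using this
  have h2t : (2:ℝ) ^ t = 1 + x := Real.rpow_logb (by norm_num) (by norm_num) hx1'
  have hkey := key_rpow_ineq t ht0 ht1 (k:ℝ) hK
  rw [h2t] at hkey
  have hkey' : (1 + (k:ℝ)) ^ t ≤ 1 + (k:ℝ) * x := by linarith
  have hpos : (0:ℝ) < (1 + (k:ℝ)) ^ t := Real.rpow_pos_of_pos (by linarith) t
  have hmono : Real.logb 2 ((1 + (k:ℝ)) ^ t) ≤ Real.logb 2 (1 + (k:ℝ) * x) :=
    Real.logb_le_logb_of_le (by norm_num) hpos hkey'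
  have heq : Real.logb 2 ((1 + (k:ℝ)) ^ t) = t * Real.logb 2 (1 + (k:ℝ)) := by
    rw [Real.logb, Real.log_rpow (by linarith), Real.logb, mul_div_assoc]
  rw [heq] at hmono
  linarith [hmono, mul_comm t (Real.logb 2 (1 + (k:ℝ)))]
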